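/- Suppose λ·a_{b1} + (1−λ)·a_{b2} < 0 and λ·a_{b1} ≠ (1−λ)·a_{b2}, i.e. ã1 + ã2 < 0 and ã1 ≠ ã2. Define ρ+ = (1 + √(1 + (2b(ã1 + ã2))²))/(−(ã1 + ã2)) and ρ− = (−1 + √(1 + (2b(ã2 − ã1))²))/(ã2 − ã1). Then ρ1 = (ρ+ − ρ−)/2 and ρ2 = (ρ+ + ρ−)/2 satisfy the Configuration-I equilibrium equations and the geometric constraints; in particular ρ+ > 2b, |ρ−| < 2b, ρ1 > 0 and ρ2 > 0. -/
import Mathlib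


set_option maxHeartbeats 1600000 in
/-- In Configuration I with ã1 + ã2 < 0 and ã1 ≠ ã2, the values
ρ1 = (ρ+ − ρ−)/2, ρ2 = (ρ+ + ρ−)/2 built from the displayed formulas for ρ+
and ρ− satisfy the equilibrium equations and geometric constraints. -/
theorem stmt6 (μ lam ab1 ab2 b ta1 ta2 ρp ρm ρ1 ρ2 : ℝ)
    (hμ : μ > 0) (hlam1 : 0 < lam) (hlam2 : lam < 1)
    (hab1 : ab1 ∈ Set.Icc (-1 : ℝ) 1) (hab2 : ab2 ∈ Set.Icc (-1 : ℝ) 1)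
    (hb : b > 0)
    (hta1 : ta1 = lam * μ * ab1) (hta2 : ta2 = (1 - lam) * μ * ab2)
    (hsum : ta1 + ta2 < 0) (hne : ta1 ≠ ta2)
    (hρp : ρp = (1 + Real.sqrt (1 + (2 * b * (ta1 + ta2)) ^ 2)) / (-(ta1 + ta2)))
    (hρm : ρm = (-1 + Real.sqrt (1 + (2 * b * (ta2 - ta1)) ^ 2)) / (ta2 - ta1))
    (hρ1 : ρ1 = (ρp - ρm) / 2) (hρ2 : ρ2 = (ρp + ρm) / 2) :
    ta2 * (ρ1 ^ 2 + ρ2 ^ 2 - 4 * b ^ 2) + 2 * ta1 * ρ1 * ρ2 + 2 * ρ2 = 0 ∧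
    ta1 * (ρ1 ^ 2 + ρ2 ^ 2 - 4 * b ^ 2) + 2 * ta2 * ρ1 * ρ2 + 2 * ρ1 = 0 ∧
    ρ1 > 0 ∧ ρ2 > 0 ∧ ρ1 + ρ2 > 2 * b ∧ |ρ1 - ρ2| < 2 * b ∧
    ρp > 2 * b ∧ |ρm| < 2 * b := by
  set s := ta1 + ta2 with hsdef
  set d := ta2 - ta1 with hddef
  have hs : s < 0 := hsum
  have hsne : s ≠ 0 := ne_of_lt hs
  have hd : d ≠ 0 := sub_ne_zero.mpr (Ne.symm hne)
  set S := Real.sqrt (1 + (2 * b * s) ^ 2) with hSdef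
  set D := Real.sqrt (1 + (2 * b * d) ^ 2) with hDdef
  clear_value s d S D
  have hS2 : S ^ 2 = 1 + (2 * b * s) ^ 2 := by
    rw [hSdef]; exact Real.sq_sqrt (by positivity)
  have hD2 : D ^ 2 = 1 + (2 * b * d) ^ 2 := by
    rw [hDdef]; exact Real.sq_sqrt (by positivity)
  have hSpos : 0 < S := by rw [hSdef]; exact Real.sqrt_pos.mpr (by positivity)
  have hDpos : 0 < D := by rw [hDdef]; exact Real.sqrt_pos.mpr (by positivity)
  have hbd : (0:ℝ) < (2 * b * d) ^ 2 := by
    have : 2 * b * d ≠ 0 := by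
      intro h
      rcases mul_eq_zero.mp h with h | h
      · linarith
      · exact hd h
    exact lt_of_le_of_ne (sq_nonneg _) (Ne.symm (pow_ne_zero 2 this))
  have hD1 : 1 < D := by nlinarith [hD2, hDpos, hbd]
  -- key products
  have hps : ρp * (-s) = 1 + S := by
    rw [hρp]; field_simp
  have hmd : ρm * d = -1 + D := by
    rw [hρm]; field_simp
  -- quadratic identities
  have hA : s * (ρp ^ 2 - 4 * b ^ 2) + 2 * ρp = 0 := by
    have h : s * (s * (ρp ^ 2 - 4 * b ^ 2) + 2 * ρp) = 0 := by
      linear_combination (ρp * (-s) + S - 1) * hps + hS2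
    rcases mul_eq_zero.mp h with h | h
    · exact absurd h hsne
    · exact h
  have hB : d * (ρm ^ 2 - 4 * b ^ 2) + 2 * ρm = 0 := by
    have h : d * (d * (ρm ^ 2 - 4 * b ^ 2) + 2 * ρm) = 0 := by
      linear_combination (ρm * d + 1 + D) * hmd + hD2
    rcases mul_eq_zero.mp h with h | h
    · exact absurd h hd
    · exact h
  -- ρp > 2b
  have hρpgt : ρp > 2 * b := by
    rw [hρp, gt_iff_lt, lt_div_iff₀ (by linarith : (0:ℝ) < -s)]
    nlinarith [hS2, hSpos, mul_pos hb (neg_pos.mpr hs)]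
  -- |ρm| < 2b
  have hmdpos : 0 < ρm * d := by rw [hmd]; linarith
  have hm2 : ρm ^ 2 < 4 * b ^ 2 := by
    have hd2 : 0 < d ^ 2 := by positivity
    have hB' : d ^ 2 * ρm ^ 2 + 2 * (ρm * d) = 4 * b ^ 2 * d ^ 2 := by
      linear_combination d * hB
    have h1 : d ^ 2 * ρm ^ 2 < d ^ 2 * (4 * b ^ 2) := by linarith
    exact lt_of_mul_lt_mul_left h1 hd2.le
  have hρmabs : |ρm| < 2 * b := by
    rw [abs_lt]
    constructor
    · nlinarith [sq_nonneg (ρm + 2 * b)]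
    · nlinarith [sq_nonneg (ρm - 2 * b)]
  have hρmlt : ρm < 2 * b := (abs_lt.mp hρmabs).2
  have hρmgt : -(2 * b) < ρm := (abs_lt.mp hρmabs).1
  refine ⟨?_, ?_, ?_, ?_, ?_, ?_, hρpgt, hρmabs⟩
  · rw [hρ1, hρ2]
    linear_combination (1/2) * hA + (1/2) * hB - ((ρp^2-4*b^2)/2) * hsdef - ((ρm^2-4*b^2)/2) * hddef
  · rw [hρ1, hρ2]
    linear_combination (1/2) * hA - (1/2) * hB - ((ρp^2-4*b^2)/2) * hsdef + ((ρm^2-4*b^2)/2) * hddef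
  · rw [hρ1]; linarith
  · rw [hρ2]; linarith
  · rw [hρ1, hρ2]; linarith
  · rw [hρ1, hρ2]
    have : (ρp - ρm) / 2 - (ρp + ρm) / 2 = -ρm := by ring
    rw [this, abs_neg]; exact hρmabs
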